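/- Let y ∈ Y be an attribute, let j_1, …, j_n be non-negative integers, let z be a non-negative integer, and let Σ = {{y^0} ⇒ {y^{j_i}} | i = 1, …, n}. Then Σ ⊢ {y^0} ⇒ {y^z} if and only if there exist non-negative integers c_1, …, c_n such that c_1·j_1 + ⋯ + c_n·j_n = z. -/

import Mathlib

namespace TAI

variable {Y : Type*}

/-- Time shift of a set of time-annotated attributes: `M + j`. -/
def shiftS (M : Set (Y × ℤ)) (j : ℤ) : Set (Y × ℤ) :=
  (fun p : Y × ℤ => (p.1, p.2 + j)) '' M

/-- Time shift of a finite set of time-annotated attributes: `A + j`. -/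
def shiftF [DecidableEq Y] (A : Finset (Y × ℤ)) (j : ℤ) : Finset (Y × ℤ) :=
  A.image (fun p => (p.1, p.2 + j))

/-- An attribute implication over `Y` annotated by time points: a pair
`(A, B)` of finite subsets of `T_Y = Y × ℤ`, read as `A ⇒ B`. -/
abbrev Fml (Y : Type*) := Finset (Y × ℤ) × Finset (Y × ℤ)

/-- `A ⇒ B` is true in `M ⊆ T_Y`: for every `i ∈ ℤ`, `A + i ⊆ M` implies `B + i ⊆ M`. -/
def Holds [DecidableEq Y] (M : Set (Y × ℤ)) (φ : Fml Y) : Prop :=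
  ∀ i : ℤ, ↑(shiftF φ.1 i) ⊆ M → ↑(shiftF φ.2 i) ⊆ M

/-- The models of a theory `T`. -/
def Mods [DecidableEq Y] (T : Set (Fml Y)) : Set (Set (Y × ℤ)) :=
  {M | ∀ φ ∈ T, Holds M φ}

/-- Semantic entailment: `T ⊨ φ`. -/
def Entails [DecidableEq Y] (T : Set (Fml Y)) (φ : Fml Y) : Prop :=
  ∀ M ∈ Mods T, Holds M φ

/-- Semantic closure `[M]_Σ`. -/
def semClos [DecidableEq Y] (T : Set (Fml Y)) (M : Set (Y × ℤ)) : Set (Y × ℤ) :=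
  ⋂₀ {N | N ∈ Mods T ∧ M ⊆ N}

/-- Classical (time-point-free) truth: `M ⊨_PL A ⇒ B` iff `A ⊆ M` implies `B ⊆ M`. -/
def HoldsPL (M : Set (Y × ℤ)) (φ : Fml Y) : Prop :=
  ↑φ.1 ⊆ M → ↑φ.2 ⊆ M

/-- Classical models. -/
def ModsPL (T : Set (Fml Y)) : Set (Set (Y × ℤ)) :=
  {M | ∀ φ ∈ T, HoldsPL M φ}

/-- Classical semantic entailment `⊨_PL`. -/
def EntailsPL (T : Set (Fml Y)) (φ : Fml Y) : Prop :=
  ∀ M ∈ ModsPL T, HoldsPL M φ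

/-- `Σ^PL = {A + i ⇒ B + i | A ⇒ B ∈ Σ, i ∈ ℤ}`. -/
def shiftAll [DecidableEq Y] (T : Set (Fml Y)) : Set (Fml Y) :=
  {ψ | ∃ φ ∈ T, ∃ i : ℤ, ψ = (shiftF φ.1 i, shiftF φ.2 i)}

/-- One step of the syntactic closure construction. -/
def synStep [DecidableEq Y] (T : Set (Fml Y)) (M : Set (Y × ℤ)) : Set (Y × ℤ) :=
  M ∪ ⋃₀ {S | ∃ φ ∈ T, ∃ i : ℤ, ↑(shiftF φ.1 i) ⊆ M ∧ S = (↑(shiftF φ.2 i) : Set (Y × ℤ))}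

/-- `M_Σ^n`. -/
def synIter [DecidableEq Y] (T : Set (Fml Y)) (M : Set (Y × ℤ)) : ℕ → Set (Y × ℤ)
  | 0 => M
  | n + 1 => synStep T (synIter T M n)

/-- The syntactic closure `M_Σ^ω`. -/
def synClos [DecidableEq Y] (T : Set (Fml Y)) (M : Set (Y × ℤ)) : Set (Y × ℤ) :=
  ⋃ n : ℕ, synIter T M n

/-- Provability from `T` using the rules (Ax), (Cut) and (Shf). -/
inductive Prov [DecidableEq Y] (T : Set (Fml Y)) : Fml Y → Prop
  | hyp {φ : Fml Y} : φ ∈ T → Prov T φ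
  | ax (A B : Finset (Y × ℤ)) : Prov T (A ∪ B, A)
  | cut {A B C D : Finset (Y × ℤ)} :
      Prov T (A, B) → Prov T (B ∪ C, D) → Prov T (A ∪ C, D)
  | shf {A B : Finset (Y × ℤ)} (i : ℤ) :
      Prov T (A, B) → Prov T (shiftF A i, shiftF B i)

/-- Provability from `T` using only the rules (Ax) and (Cut) (no time shifts). -/
inductive ProvAC [DecidableEq Y] (T : Set (Fml Y)) : Fml Y → Prop
  | hyp {φ : Fml Y} : φ ∈ T → ProvAC T φ
  | ax (A B : Finset (Y × ℤ)) : ProvAC T (A ∪ B, A)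
  | cut {A B C D : Finset (Y × ℤ)} :
      ProvAC T (A, B) → ProvAC T (B ∪ C, D) → ProvAC T (A ∪ C, D)

/-- Provability from `T` using the rules (Ax) and (Cut_i). -/
inductive ProvCuti [DecidableEq Y] (T : Set (Fml Y)) : Fml Y → Prop
  | hyp {φ : Fml Y} : φ ∈ T → ProvCuti T φ
  | ax (A B : Finset (Y × ℤ)) : ProvCuti T (A ∪ B, A)
  | cuti {A B C D : Finset (Y × ℤ)} (i : ℤ) :
      ProvCuti T (A, shiftF B i) → ProvCuti T (B ∪ C, D) →
      ProvCuti T (A ∪ shiftF C i, shiftF D i)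

/-- Provability from `T` using the rules (Ref) and (Sim_i). -/
inductive ProvRS [DecidableEq Y] (T : Set (Fml Y)) : Fml Y → Prop
  | hyp {φ : Fml Y} : φ ∈ T → ProvRS T φ
  | ref (A : Finset (Y × ℤ)) : ProvRS T (A, A)
  | simi {A B C D : Finset (Y × ℤ)} (i : ℤ) :
      ProvRS T (A, shiftF B i) → ProvRS T (C, D) →
      ProvRS T (A ∪ shiftF (C \ B) i, shiftF D i)

/-- The closure operator induced by a closure system `S`. -/
def closOp (S : Set (Set (Y × ℤ))) (M : Set (Y × ℤ)) : Set (Y × ℤ) :=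
  ⋂₀ {N | N ∈ S ∧ M ⊆ N}

/-- The least time point occurring in a finite set (`0` for the empty set). -/
def lo (A : Finset (Y × ℤ)) : ℤ :=
  (A.image Prod.snd).min.untopD 0

/-- The greatest time point occurring in a finite set (`0` for the empty set). -/
def hi (A : Finset (Y × ℤ)) : ℤ :=
  (A.image Prod.snd).max.unbotD 0

/-- A formula `A ⇒ B` is predictive if `A ≠ ∅`, `B ≠ ∅`, and every time point in
`A` is less than or equal to every time point in `B`. -/
def Predictive (φ : Fml Y) : Prop :=
  φ.1.Nonempty ∧ φ.2.Nonempty ∧ ∀ p ∈ φ.1, ∀ q ∈ φ.2, p.2 ≤ q.2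

lemma shiftF_union [DecidableEq Y] (A B : Finset (Y × ℤ)) (i : ℤ) :
    shiftF (A ∪ B) i = shiftF A i ∪ shiftF B i := by
  simp [shiftF, Finset.image_union]

lemma shiftF_shiftF [DecidableEq Y] (A : Finset (Y × ℤ)) (a b : ℤ) :
    shiftF (shiftF A a) b = shiftF A (a + b) := by
  unfold shiftF
  rw [Finset.image_image]
  apply Finset.image_congr
  intro p _
  simp [add_assoc]

lemma prov_sound [DecidableEq Y] {T : Set (Fml Y)} {φ : Fml Y}
    (h : Prov T φ) : Entails T φ := by
  induction h with
  | hyp hφ => intro M hM; exact hM _ hφ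
  | ax A B =>
      intro M hM i hsub
      refine Set.Subset.trans ?_ hsub
      rw [shiftF_union]
      intro x hx
      simp only [Finset.coe_union, Set.mem_union]
      exact Or.inl hx
  | @cut A B C D h1 h2 ih1 ih2 =>
      intro M hM i hsub
      rw [shiftF_union] at hsub
      simp only [Finset.coe_union, Set.union_subset_iff] at hsub
      have hB := ih1 M hM i hsub.1
      have : ↑(shiftF (B ∪ C) i) ⊆ M := by
        rw [shiftF_union]
        simp only [Finset.coe_union, Set.union_subset_iff]
        exact ⟨hB, hsub.2⟩
      exact ih2 M hM i this
  | shf j h ih =>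
      intro M hM i hsub
      rw [shiftF_shiftF] at hsub ⊢
      exact ih M hM (j + i) hsub

lemma prov_step [DecidableEq Y] {T : Set (Fml Y)} (y : Y) (a b : ℤ)
    (h1 : Prov T ({(y, (0 : ℤ))}, {(y, a)}))
    (h2 : Prov T ({(y, (0 : ℤ))}, {(y, b)})) :
    Prov T ({(y, (0 : ℤ))}, {(y, b + a)}) := by
  have h3 := Prov.shf a h2
  simp only [shiftF, Finset.image_singleton, zero_add] at h3
  have h4 := Prov.cut (C := (∅ : Finset (Y × ℤ))) h1 (by simpa using h3)
  simpa using h4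

/-- for `Σ = {{y^0} ⇒ {y^{j_i}} | i = 1, …, n}`,
`Σ ⊢ {y^0} ⇒ {y^z}` iff `z = c_1·j_1 + ⋯ + c_n·j_n` for some non-negative
integers `c_1, …, c_n`. -/
theorem unbounded_subset_sum_reduction [DecidableEq Y] [Fintype Y] [Nonempty Y]
    (y : Y) (n : ℕ) (j : Fin n → ℕ) (z : ℕ) :
    Prov {φ : Fml Y | ∃ i : Fin n, φ = ({(y, (0 : ℤ))}, {(y, (j i : ℤ))})}
        ({(y, (0 : ℤ))}, {(y, (z : ℤ))}) ↔
      ∃ c : Fin n → ℕ, ∑ i, c i * j i = z := by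
  set T : Set (Fml Y) :=
    {φ : Fml Y | ∃ i : Fin n, φ = ({(y, (0 : ℤ))}, {(y, (j i : ℤ))})} with hT
  constructor
  · intro h
    set M : Set (Y × ℤ) :=
      {p | p.1 = y ∧ ∃ c : Fin n → ℕ, p.2 = ∑ i, (c i : ℤ) * (j i : ℤ)} with hM
    have hMmod : M ∈ Mods T := by
      rintro φ ⟨i, rfl⟩ t hsub
      simp only [shiftF, Finset.image_singleton, zero_add, Finset.coe_singleton,
        Set.singleton_subset_iff] at hsub ⊢
      obtain ⟨-, c, hc⟩ := hsub
      have hc2 : t = ∑ k, (c k : ℤ) * (j k : ℤ) := hc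
      refine ⟨rfl, fun k => c k + if k = i then 1 else 0, ?_⟩
      show (j i : ℤ) + t = _
      rw [hc2]
      push_cast
      simp [add_mul, Finset.sum_add_distrib, ite_mul, Finset.sum_ite_eq',
        add_comm]
    have hH := prov_sound h M hMmod 0
    simp only [shiftF, Finset.image_singleton, add_zero, Finset.coe_singleton,
      Set.singleton_subset_iff] at hH
    have h0 : ((y, (0 : ℤ)) : Y × ℤ) ∈ M := by
      refine ⟨rfl, fun _ => 0, by simp⟩
    obtain ⟨-, c, hc⟩ := hH h0
    refine ⟨c, ?_⟩
    have : ((z : ℤ)) = ((∑ i, c i * j i : ℕ) : ℤ) := by push_cast; exact hc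
    exact_mod_cast this.symm
  · rintro ⟨c, hc⟩
    have key : ∀ N (c : Fin n → ℕ), (∑ i, c i) = N →
        Prov T ({(y, (0 : ℤ))}, {(y, ((∑ i, c i * j i : ℕ) : ℤ))}) := by
      intro N
      induction N with
      | zero =>
          intro c hc0
          have : ∀ i, c i = 0 := by
            intro i
            exact Finset.sum_eq_zero_iff.mp hc0 i (Finset.mem_univ i)
          simp only [this, zero_mul, Finset.sum_const_zero, Nat.cast_zero]
          have := Prov.ax (T := T) ({(y, (0 : ℤ))}) ∅
          simpa using this
      | succ N ih =>
          intro c hcs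
          have hex : ∃ i, 0 < c i := by
            by_contra hcon
            push_neg at hcon
            simp only [Nat.le_zero] at hcon
            simp [hcon] at hcs
          obtain ⟨i, hi⟩ := hex
          set c' : Fin n → ℕ := Function.update c i (c i - 1) with hc'
          have hs : ∀ g : Fin n → ℕ,
              ∑ k, g k = g i + ∑ k ∈ Finset.univ.erase i, g k := fun g =>
            (Finset.add_sum_erase _ g (Finset.mem_univ i)).symm
          have hne : ∀ k ∈ Finset.univ.erase i, c' k = c k := fun k hk =>
            Function.update_of_ne (Finset.ne_of_mem_erase hk) _ _
          have hci : c' i = c i - 1 := Function.update_self _ _ _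
          have hsum' : (∑ k, c' k) = N := by
            rw [hs c] at hcs
            rw [hs c', Finset.sum_congr rfl hne, hci]
            show c i - 1 + ∑ k ∈ Finset.univ.erase i, c k = N
            omega
          have hprev := ih c' hsum'
          have hgen : Prov T ({(y, (0 : ℤ))}, {(y, (j i : ℤ))}) :=
            Prov.hyp ⟨i, rfl⟩
          have hpr := prov_step y (j i : ℤ) ((∑ k, c' k * j k : ℕ) : ℤ) hgen hprev
          have hnat : ∑ k, c' k * j k + j i = ∑ k, c k * j k := by
            rw [hs (fun k => c' k * j k), hs (fun k => c k * j k)]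
            rw [Finset.sum_congr rfl (fun k hk => by rw [hne k hk]), hci]
            have h3 : (c i - 1) * j i = c i * j i - j i := Nat.sub_one_mul _ _
            have h4 : j i ≤ c i * j i := Nat.le_mul_of_pos_left _ hi
            omega
          have heq : ((∑ k, c' k * j k : ℕ) : ℤ) + (j i : ℤ)
              = ((∑ k, c k * j k : ℕ) : ℤ) := by exact_mod_cast hnat
          rwa [heq] at hpr
    have := key (∑ i, c i) c rfl
    rwa [hc] at this

end TAI
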